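/- (Lower bound for the conditional variance of fractional Brownian motion via its Volterra kernel.) Let H ∈ (0,1/2) and T > 0. Define, for 0 < s ≤ t, K_H(t,s) := t^{H−1/2} s^{1/2−H} (t−s)^{H−1/2} + (1/2 − H) s^{1/2−H} ∫_s^t (r−s)^{H−1/2} r^{H−3/2} dr. Then there exists a constant c > 0, depending only on H and T, such that for all 0 ≤ s < t ≤ T: ∫_s^t K_H(t,r)² dr ≥ c (t − s)^{2H}. -/

import Mathlib

open MeasureTheory intervalIntegral

/-- The Volterra kernel of fractional Brownian motion with Hurst index `H ∈ (0,1/2)`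
(up to a positive multiplicative constant). -/
noncomputable def fbmKernel (H t s : ℝ) : ℝ :=
  t ^ (H - 1/2) * s ^ (1/2 - H) * (t - s) ^ (H - 1/2) +
    (1/2 - H) * s ^ (1/2 - H) * ∫ r in s..t, (r - s) ^ (H - 1/2) * r ^ (H - 3/2)

/- Auxiliary lemmas -/

section Aux

variable {H T t s r u m : ℝ}

/-- Pointwise bound on the inner integrand. -/
lemma fbm_inner_integrand_le (hH0 : 0 < H) (hH : H < 1/2) (hr : 0 < r) (hu : r < u) :
    (u - r) ^ (H - 1/2) * u ^ (H - 3/2)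
      ≤ r ^ ((3*H - 2)/2) * (u - r) ^ (H/2 - 1) := by
  have hu0 : 0 < u := hr.trans hu
  have hur : 0 < u - r := by linarith
  have h1 : u ^ (H - 1/2) ≤ r ^ (H - 1/2) :=
    Real.rpow_le_rpow_of_nonpos hr hu.le (by linarith)
  have h2 : u ^ (-(1/2 - H/2)) ≤ r ^ (-(1/2 - H/2)) :=
    Real.rpow_le_rpow_of_nonpos hr hu.le (by linarith)
  have h3 : u ^ ((1/2 - H/2) - 1) ≤ (u - r) ^ ((1/2 - H/2) - 1) :=
    Real.rpow_le_rpow_of_nonpos hur (by linarith) (by linarith)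
  have hsplit : u ^ (H - 3/2)
      = u ^ (H - 1/2) * u ^ (-(1/2 - H/2)) * u ^ ((1/2 - H/2) - 1) := by
    rw [← Real.rpow_add hu0, ← Real.rpow_add hu0]; ring_nf
  have hmul : u ^ (H - 3/2)
      ≤ r ^ (H - 1/2) * r ^ (-(1/2 - H/2)) * (u - r) ^ ((1/2 - H/2) - 1) := by
    rw [hsplit]
    have hA : (0:ℝ) ≤ u ^ (H - 1/2) := Real.rpow_nonneg hu0.le _
    have hB : (0:ℝ) ≤ u ^ (-(1/2 - H/2)) := Real.rpow_nonneg hu0.le _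
    have hA' : (0:ℝ) ≤ r ^ (H - 1/2) := Real.rpow_nonneg hr.le _
    have hB' : (0:ℝ) ≤ r ^ (-(1/2 - H/2)) := Real.rpow_nonneg hr.le _
    exact mul_le_mul (mul_le_mul h1 h2 hB hA') h3 (Real.rpow_nonneg hu0.le _)
      (mul_nonneg hA' hB')
  calc (u - r) ^ (H - 1/2) * u ^ (H - 3/2)
      ≤ (u - r) ^ (H - 1/2) *
        (r ^ (H - 1/2) * r ^ (-(1/2 - H/2)) * (u - r) ^ ((1/2 - H/2) - 1)) :=
        mul_le_mul_of_nonneg_left hmul (Real.rpow_nonneg hur.le _)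
    _ = (r ^ (H - 1/2) * r ^ (-(1/2 - H/2))) *
        ((u - r) ^ (H - 1/2) * (u - r) ^ ((1/2 - H/2) - 1)) := by ring
    _ = r ^ ((3*H - 2)/2) * (u - r) ^ (H/2 - 1) := by
        rw [← Real.rpow_add hr, ← Real.rpow_add hur]; ring_nf

/-- The comparison integrand is interval integrable. -/
lemma fbm_comp_intble (hH0 : 0 < H) (hr : (0:ℝ) < r) (hrt : r ≤ t) :
    IntervalIntegrable (fun u => r ^ ((3*H - 2)/2) * (u - r) ^ (H/2 - 1)) volume r t := by
  have h : IntervalIntegrable (fun x : ℝ => x ^ (H/2 - 1)) volume 0 (t - r) :=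
    intervalIntegrable_rpow' (by linarith)
  have h2 := (h.comp_sub_right r).const_mul (r ^ ((3*H - 2)/2))
  simpa using h2

/-- Integrability of the inner integrand. -/
lemma fbm_inner_intble (hH0 : 0 < H) (hH : H < 1/2) (hr : 0 < r) (hrt : r ≤ t) :
    IntervalIntegrable (fun u => (u - r) ^ (H - 1/2) * u ^ (H - 3/2)) volume r t := by
  refine (fbm_comp_intble hH0 hr hrt).mono_fun' ?_ ?_
  · exact ((Measurable.mul (by fun_prop) (by fun_prop)).aestronglyMeasurable)
  · rw [Set.uIoc_of_le hrt]
    filter_upwards [self_mem_ae_restrict measurableSet_Ioc] with u hu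
    have hru : r < u := hu.1
    have hu0 : 0 < u := hr.trans hru
    have h0 : (0:ℝ) ≤ (u - r) ^ (H - 1/2) * u ^ (H - 3/2) :=
      mul_nonneg (Real.rpow_nonneg (by linarith) _) (Real.rpow_nonneg hu0.le _)
    rw [Real.norm_eq_abs, abs_of_nonneg h0]
    exact fbm_inner_integrand_le hH0 hH hr hru

/-- Bound on the inner integral. -/
lemma fbm_inner_integral_le (hH0 : 0 < H) (hH : H < 1/2) (hr : 0 < r) (hrt : r < t) :
    (∫ u in r..t, (u - r) ^ (H - 1/2) * u ^ (H - 3/2))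
      ≤ r ^ ((3*H - 2)/2) * ((t - r) ^ (H/2) / (H/2)) := by
  have hmono : (∫ u in r..t, (u - r) ^ (H - 1/2) * u ^ (H - 3/2))
      ≤ ∫ u in r..t, r ^ ((3*H - 2)/2) * (u - r) ^ (H/2 - 1) := by
    refine integral_mono_on hrt.le (fbm_inner_intble hH0 hH hr hrt.le)
      (fbm_comp_intble hH0 hr hrt.le) ?_
    intro u hu
    rcases eq_or_lt_of_le hu.1 with h | h
    · subst h
      rw [sub_self, Real.zero_rpow (show H - 1/2 ≠ 0 by intro h; linarith),
        Real.zero_rpow (show H/2 - 1 ≠ 0 by intro h; nlinarith)]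
      simp
    · exact fbm_inner_integrand_le hH0 hH hr h
  refine hmono.trans_eq ?_
  rw [intervalIntegral.integral_const_mul]
  congr 1
  have := intervalIntegral.integral_comp_sub_right (a := r) (b := t)
    (fun x : ℝ => x ^ (H/2 - 1)) r
  rw [this, sub_self]
  rw [integral_rpow (Or.inl (by linarith : (-1:ℝ) < H/2 - 1))]
  rw [Real.zero_rpow (show H/2 - 1 + 1 ≠ 0 by intro h; nlinarith)]
  ring_nf

/-- Nonnegativity of the second summand of the kernel. -/
lemma fbm_term2_nonneg (hH0 : 0 < H) (hH : H < 1/2) (hr : 0 < r) (hrt : r ≤ t) :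
    0 ≤ (1/2 - H) * r ^ (1/2 - H) * ∫ u in r..t, (u - r) ^ (H - 1/2) * u ^ (H - 3/2) := by
  refine mul_nonneg (mul_nonneg (by linarith) (Real.rpow_nonneg hr.le _)) ?_
  refine intervalIntegral.integral_nonneg hrt fun u hu => ?_
  exact mul_nonneg (Real.rpow_nonneg (by linarith [hu.1]) _)
    (Real.rpow_nonneg (le_trans hr.le hu.1) _)

lemma fbm_kernel_nonneg (hH0 : 0 < H) (hH : H < 1/2) (hr : 0 < r) (hrt : r ≤ t) :
    0 ≤ fbmKernel H t r := by
  have ht0 : 0 < t := lt_of_lt_of_le hr hrt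
  refine add_nonneg ?_ (fbm_term2_nonneg hH0 hH hr hrt)
  exact mul_nonneg (mul_nonneg (Real.rpow_nonneg ht0.le _) (Real.rpow_nonneg hr.le _))
    (Real.rpow_nonneg (by linarith) _)

/-- The first summand is a lower bound for the kernel. -/
lemma fbm_term1_le_kernel (hH0 : 0 < H) (hH : H < 1/2) (hr : 0 < r) (hrt : r ≤ t) :
    t ^ (H - 1/2) * r ^ (1/2 - H) * (t - r) ^ (H - 1/2) ≤ fbmKernel H t r :=
  le_add_of_nonneg_right (fbm_term2_nonneg hH0 hH hr hrt)

/-- Upper bound for the kernel. -/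
lemma fbm_kernel_le (hH0 : 0 < H) (hH : H < 1/2) (hT : 0 < T) (hr : 0 < r)
    (hrt : r ≤ t) (htT : t ≤ T) :
    fbmKernel H t r ≤ (t - r) ^ (H - 1/2)
      + ((1/2 - H) * (2/H) * T ^ (H/2)) * r ^ ((H - 1)/2) := by
  have ht0 : 0 < t := lt_of_lt_of_le hr hrt
  rcases eq_or_lt_of_le hrt with rfl | hrt'
  · have : fbmKernel H r r = 0 := by
      simp only [fbmKernel]
      rw [sub_self, Real.zero_rpow (show H - 1/2 ≠ 0 by intro h; linarith),
        intervalIntegral.integral_same, mul_zero, mul_zero, add_zero]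
    rw [this]
    refine add_nonneg (Real.rpow_nonneg (by linarith) _) ?_
    refine mul_nonneg (mul_nonneg (mul_nonneg (by linarith) (by positivity))
      (Real.rpow_nonneg hT.le _)) (Real.rpow_nonneg hr.le _)
  have hterm1 : t ^ (H - 1/2) * r ^ (1/2 - H) * (t - r) ^ (H - 1/2)
      ≤ (t - r) ^ (H - 1/2) := by
    have h1 : r ^ (1/2 - H) ≤ t ^ (1/2 - H) :=
      Real.rpow_le_rpow hr.le hrt (by linarith)
    have h2 : t ^ (H - 1/2) * t ^ (1/2 - H) = 1 := by
      rw [← Real.rpow_add ht0]; norm_num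
    have h3 : t ^ (H - 1/2) * r ^ (1/2 - H) ≤ 1 := by
      calc t ^ (H - 1/2) * r ^ (1/2 - H) ≤ t ^ (H - 1/2) * t ^ (1/2 - H) :=
            mul_le_mul_of_nonneg_left h1 (Real.rpow_nonneg ht0.le _)
        _ = 1 := h2
    calc t ^ (H - 1/2) * r ^ (1/2 - H) * (t - r) ^ (H - 1/2)
        ≤ 1 * (t - r) ^ (H - 1/2) :=
          mul_le_mul_of_nonneg_right h3 (Real.rpow_nonneg (by linarith) _)
      _ = (t - r) ^ (H - 1/2) := one_mul _
  have hterm2 : (1/2 - H) * r ^ (1/2 - H) * ∫ u in r..t, (u - r) ^ (H - 1/2) * u ^ (H - 3/2)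
      ≤ ((1/2 - H) * (2/H) * T ^ (H/2)) * r ^ ((H - 1)/2) := by
    have hI := fbm_inner_integral_le hH0 hH hr hrt'
    have hI2 : r ^ ((3*H - 2)/2) * ((t - r) ^ (H/2) / (H/2))
        ≤ r ^ ((3*H - 2)/2) * (T ^ (H/2) * (2/H)) := by
      refine mul_le_mul_of_nonneg_left ?_ (Real.rpow_nonneg hr.le _)
      rw [div_eq_mul_inv]
      have htr : (t - r) ^ (H/2) ≤ T ^ (H/2) :=
        Real.rpow_le_rpow (by linarith) (by linarith) (by linarith)
      have hinv : ((H:ℝ)/2)⁻¹ = 2/H := by field_simp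
      rw [hinv]
      exact mul_le_mul_of_nonneg_right htr (by positivity)
    calc (1/2 - H) * r ^ (1/2 - H) * ∫ u in r..t, (u - r) ^ (H - 1/2) * u ^ (H - 3/2)
        ≤ (1/2 - H) * r ^ (1/2 - H) * (r ^ ((3*H - 2)/2) * (T ^ (H/2) * (2/H))) := by
          refine mul_le_mul_of_nonneg_left (hI.trans hI2) ?_
          exact mul_nonneg (by linarith) (Real.rpow_nonneg hr.le _)
      _ = ((1/2 - H) * (2/H) * T ^ (H/2)) * (r ^ (1/2 - H) * r ^ ((3*H - 2)/2)) := by ring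
      _ = ((1/2 - H) * (2/H) * T ^ (H/2)) * r ^ ((H - 1)/2) := by
          rw [← Real.rpow_add hr]; ring_nf
  calc fbmKernel H t r
      = t ^ (H - 1/2) * r ^ (1/2 - H) * (t - r) ^ (H - 1/2)
        + (1/2 - H) * r ^ (1/2 - H) * ∫ u in r..t, (u - r) ^ (H - 1/2) * u ^ (H - 3/2) := rfl
    _ ≤ _ := add_le_add hterm1 hterm2

/-- A measurable function agreeing with the kernel. -/
lemma fbm_kernel_meas (H t : ℝ) :
    ∃ φ : ℝ → ℝ, Measurable φ ∧ ∀ r : ℝ, r ≤ t → fbmKernel H t r = φ r := by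
  classical
  set F : ℝ × ℝ → ℝ := fun p =>
    if p.1 < p.2 ∧ p.2 < t then (p.2 - p.1) ^ (H - 1/2) * p.2 ^ (H - 3/2) else 0 with hF
  have hFmeas : Measurable F := by
    refine Measurable.ite ?_ (by fun_prop) measurable_const
    exact (measurableSet_lt measurable_fst measurable_snd).inter
      (measurableSet_lt measurable_snd measurable_const)
  have hGmeas : StronglyMeasurable fun r : ℝ => ∫ u, F (r, u) :=
    hFmeas.stronglyMeasurable.integral_prod_right'
  refine ⟨fun r => t ^ (H - 1/2) * r ^ (1/2 - H) * (t - r) ^ (H - 1/2)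
      + (1/2 - H) * r ^ (1/2 - H) * ∫ u, F (r, u), ?_, ?_⟩
  · have hm1 : Measurable fun r : ℝ =>
        t ^ (H - 1/2) * r ^ (1/2 - H) * (t - r) ^ (H - 1/2) := by fun_prop
    have hm2 : Measurable fun r : ℝ => (1/2 - H) * r ^ (1/2 - H) := by fun_prop
    exact hm1.add (hm2.mul hGmeas.measurable)
  · intro r hrt
    have hinner : (∫ u in r..t, (u - r) ^ (H - 1/2) * u ^ (H - 3/2)) = ∫ u, F (r, u) := by
      rw [intervalIntegral.integral_of_le hrt, MeasureTheory.integral_Ioc_eq_integral_Ioo,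
        ← MeasureTheory.integral_indicator measurableSet_Ioo]
      congr 1
      funext u
      by_cases h : u ∈ Set.Ioo r t
      · simp only [Set.indicator_of_mem h, hF]
        rw [if_pos ⟨h.1, h.2⟩]
      · simp only [Set.indicator_of_notMem h, hF]
        rw [if_neg (by simpa [Set.mem_Ioo] using h)]
    simp only [fbmKernel, hinner]

end Aux

set_option maxHeartbeats 1000000 in
/-- **Lower bound for the conditional variance of fractional Brownian motion via its
Volterra kernel.** -/
theorem fbm_kernel_variance_lower_bound
    (H : ℝ) (hH0 : 0 < H) (hH : H < 1/2) (T : ℝ) (hT : 0 < T) :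
    ∃ c : ℝ, 0 < c ∧ ∀ s t : ℝ, 0 ≤ s → s < t → t ≤ T →
      c * (t - s) ^ (2 * H) ≤ ∫ r in s..t, (fbmKernel H t r) ^ 2 := by
  refine ⟨1/(4*H), by positivity, fun s t hs hst htT => ?_⟩
  have ht0 : 0 < t := lt_of_le_of_lt hs hst
  set m : ℝ := (s + t)/2 with hm
  have hm0 : 0 < m := by positivity
  have hsm : s < m := by simp only [hm]; linarith
  have hmt : m < t := by simp only [hm]; linarith
  have hm2 : t/2 ≤ m := by simp only [hm]; linarith
  set C : ℝ := (1/2 - H) * (2/H) * T ^ (H/2) with hC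
  have hC0 : 0 ≤ C := by
    refine mul_nonneg (mul_nonneg (by linarith) (by positivity)) (Real.rpow_nonneg hT.le _)
  -- integrability of the squared kernel
  obtain ⟨φ, hφm, hφe⟩ := fbm_kernel_meas H t
  have hKmeas : AEStronglyMeasurable (fun r => fbmKernel H t r)
      (volume.restrict (Set.Ioc s t)) := by
    refine (hφm.aestronglyMeasurable).congr ?_
    refine ((ae_restrict_iff' measurableSet_Ioc).2 (ae_of_all _ fun r hr => ?_))
    exact (hφe r hr.2).symm
  have hgint : IntervalIntegrable
      (fun r => 2 * (t - r) ^ (2*H - 1) + 2 * C^2 * r ^ (H - 1)) volume s t := by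
    have h1 : IntervalIntegrable (fun x : ℝ => x ^ (2*H - 1)) volume (t - s) (t - t) :=
      intervalIntegrable_rpow' (by linarith)
    have h1' := (h1.comp_sub_left t).const_mul 2
    have h1'' : IntervalIntegrable (fun r : ℝ => 2 * (t - r) ^ (2*H - 1)) volume s t := by
      simpa using h1'
    have h2 : IntervalIntegrable (fun r : ℝ => 2 * C^2 * r ^ (H - 1)) volume s t :=
      (intervalIntegrable_rpow' (by linarith)).const_mul _
    exact h1''.add h2
  have hK2int : IntervalIntegrable (fun r => (fbmKernel H t r)^2) volume s t := by
    refine hgint.mono_fun' ?_ ?_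
    · rw [Set.uIoc_of_le hst.le]
      exact (hKmeas.mul hKmeas).congr (ae_of_all _ fun r => (sq (fbmKernel H t r)).symm)
    · rw [Set.uIoc_of_le hst.le]
      filter_upwards [self_mem_ae_restrict measurableSet_Ioc] with r hr
      have hr0 : 0 < r := lt_of_le_of_lt hs hr.1
      have hrt : r ≤ t := hr.2
      have hKle := fbm_kernel_le hH0 hH hT hr0 hrt htT
      have hK0 := fbm_kernel_nonneg hH0 hH hr0 hrt
      have hsq : (fbmKernel H t r)^2 ≤ ((t - r) ^ (H - 1/2) + C * r ^ ((H - 1)/2))^2 :=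
        pow_le_pow_left₀ hK0 hKle 2
      have hA2 : ((t - r) ^ (H - 1/2))^2 = (t - r) ^ (2*H - 1) := by
        rw [sq, ← Real.rpow_add' (by linarith) (by intro h; nlinarith)]
        ring_nf
      have hB2 : (r ^ ((H - 1)/2))^2 = r ^ (H - 1) := by
        rw [sq, ← Real.rpow_add' hr0.le (by intro h; nlinarith)]
        ring_nf
      rw [Real.norm_eq_abs, abs_of_nonneg (sq_nonneg _)]
      have key : ((t - r) ^ (H - 1/2) + C * r ^ ((H - 1)/2))^2
          ≤ 2 * (t - r) ^ (2*H - 1) + 2 * C^2 * r ^ (H - 1) := by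
        have h := sq_nonneg ((t - r) ^ (H - 1/2) - C * r ^ ((H - 1)/2))
        nlinarith [hA2, hB2, sq_nonneg ((t - r) ^ (H - 1/2)), sq_nonneg (C * r ^ ((H - 1)/2))]
      exact hsq.trans key
  -- splitting the integral
  have hsub1 : Set.uIcc s m ⊆ Set.uIcc s t := by
    rw [Set.uIcc_of_le hsm.le, Set.uIcc_of_le hst.le]
    exact Set.Icc_subset_Icc le_rfl hmt.le
  have hsub2 : Set.uIcc m t ⊆ Set.uIcc s t := by
    rw [Set.uIcc_of_le hmt.le, Set.uIcc_of_le hst.le]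
    exact Set.Icc_subset_Icc hsm.le le_rfl
  have hsplit : (∫ r in s..t, (fbmKernel H t r)^2)
      = (∫ r in s..m, (fbmKernel H t r)^2) + ∫ r in m..t, (fbmKernel H t r)^2 :=
    (integral_add_adjacent_intervals (hK2int.mono_set hsub1) (hK2int.mono_set hsub2)).symm
  have hnn : 0 ≤ ∫ r in s..m, (fbmKernel H t r)^2 :=
    intervalIntegral.integral_nonneg hsm.le fun u _ => sq_nonneg _
  -- lower bound on [m, t]
  set c1 : ℝ := t ^ (2*H - 1) * m ^ (1 - 2*H) with hc1
  have hc1nn : 0 ≤ c1 := mul_nonneg (Real.rpow_nonneg ht0.le _) (Real.rpow_nonneg hm0.le _)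
  have hlow : ∀ r ∈ Set.Icc m t, c1 * (t - r) ^ (2*H - 1) ≤ (fbmKernel H t r)^2 := by
    intro r hr
    rcases eq_or_lt_of_le hr.2 with rfl | hrt
    · rw [sub_self, Real.zero_rpow (by intro h; nlinarith)]
      simpa using sq_nonneg (fbmKernel H r r)
    · have hr0 : 0 < r := lt_of_lt_of_le hm0 hr.1
      have hterm1nn : 0 ≤ t ^ (H - 1/2) * r ^ (1/2 - H) * (t - r) ^ (H - 1/2) :=
        mul_nonneg (mul_nonneg (Real.rpow_nonneg ht0.le _) (Real.rpow_nonneg hr0.le _))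
          (Real.rpow_nonneg (by linarith) _)
      have h1 : (t ^ (H - 1/2) * r ^ (1/2 - H) * (t - r) ^ (H - 1/2))^2
          ≤ (fbmKernel H t r)^2 :=
        pow_le_pow_left₀ hterm1nn (fbm_term1_le_kernel hH0 hH hr0 hr.2) 2
      have htr0 : 0 < t - r := by linarith
      have hsq : (t ^ (H - 1/2) * r ^ (1/2 - H) * (t - r) ^ (H - 1/2))^2
          = t ^ (2*H - 1) * r ^ (1 - 2*H) * (t - r) ^ (2*H - 1) := by
        rw [mul_pow, mul_pow, sq, sq, sq,
          ← Real.rpow_add ht0, ← Real.rpow_add hr0, ← Real.rpow_add htr0]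
        ring_nf
      have hm_le : m ^ (1 - 2*H) ≤ r ^ (1 - 2*H) :=
        Real.rpow_le_rpow hm0.le hr.1 (by linarith)
      have h2 : c1 * (t - r) ^ (2*H - 1)
          ≤ t ^ (2*H - 1) * r ^ (1 - 2*H) * (t - r) ^ (2*H - 1) := by
        rw [hc1]
        refine mul_le_mul_of_nonneg_right ?_ (Real.rpow_nonneg htr0.le _)
        exact mul_le_mul_of_nonneg_left hm_le (Real.rpow_nonneg ht0.le _)
      calc c1 * (t - r) ^ (2*H - 1)
          ≤ t ^ (2*H - 1) * r ^ (1 - 2*H) * (t - r) ^ (2*H - 1) := h2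
        _ = (t ^ (H - 1/2) * r ^ (1/2 - H) * (t - r) ^ (H - 1/2))^2 := hsq.symm
        _ ≤ (fbmKernel H t r)^2 := h1
  have hlint : IntervalIntegrable (fun r => c1 * (t - r) ^ (2*H - 1)) volume m t := by
    have h1 : IntervalIntegrable (fun x : ℝ => x ^ (2*H - 1)) volume (t - m) (t - t) :=
      intervalIntegrable_rpow' (by linarith)
    have h1' := (h1.comp_sub_left t).const_mul c1
    simpa using h1'
  have hmono : (∫ r in m..t, c1 * (t - r) ^ (2*H - 1))
      ≤ ∫ r in m..t, (fbmKernel H t r)^2 :=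
    integral_mono_on hmt.le hlint (hK2int.mono_set hsub2) hlow
  -- computing the lower integral
  have hcomp : (∫ r in m..t, c1 * (t - r) ^ (2*H - 1))
      = c1 * ((t - m) ^ (2*H) / (2*H)) := by
    rw [intervalIntegral.integral_const_mul]
    congr 1
    have := intervalIntegral.integral_comp_sub_left (a := m) (b := t)
      (fun x : ℝ => x ^ (2*H - 1)) t
    rw [this, sub_self]
    rw [integral_rpow (Or.inl (by linarith : (-1:ℝ) < 2*H - 1))]
    rw [Real.zero_rpow (by intro h; nlinarith : 2*H - 1 + 1 ≠ 0)]
    ring_nf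
  -- final arithmetic
  have hA : (2:ℝ) ^ (2*H - 1) ≤ c1 := by
    have h1 : (t/2) ^ (1 - 2*H) ≤ m ^ (1 - 2*H) :=
      Real.rpow_le_rpow (by positivity) hm2 (by linarith)
    have h2 : (t/2) ^ (1 - 2*H) = t ^ (1 - 2*H) / 2 ^ (1 - 2*H) :=
      Real.div_rpow ht0.le (by norm_num) _
    have h3 : t ^ (2*H - 1) * t ^ (1 - 2*H) = 1 := by
      rw [← Real.rpow_add ht0]; norm_num
    have h4 : (2:ℝ) ^ (2*H - 1) * 2 ^ (1 - 2*H) = 1 := by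
      rw [← Real.rpow_add (by norm_num : (0:ℝ) < 2)]; norm_num
    have h5 : (0:ℝ) < 2 ^ (1 - 2*H) := Real.rpow_pos_of_pos (by norm_num) _
    have h6 : (0:ℝ) < t ^ (2*H - 1) := Real.rpow_pos_of_pos ht0 _
    calc (2:ℝ) ^ (2*H - 1) = 1 / 2 ^ (1 - 2*H) := by
          rw [eq_div_iff h5.ne']; exact h4
      _ = (t ^ (2*H - 1) * t ^ (1 - 2*H)) / 2 ^ (1 - 2*H) := by rw [h3]
      _ = t ^ (2*H - 1) * (t ^ (1 - 2*H) / 2 ^ (1 - 2*H)) := by ring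
      _ = t ^ (2*H - 1) * (t/2) ^ (1 - 2*H) := by rw [h2]
      _ ≤ t ^ (2*H - 1) * m ^ (1 - 2*H) := mul_le_mul_of_nonneg_left h1 h6.le
      _ = c1 := rfl
  have htm : t - m = (t - s)/2 := by simp only [hm]; ring
  have hpow : (t - m) ^ (2*H) = (t - s) ^ (2*H) / 2 ^ (2*H) := by
    rw [htm, Real.div_rpow (by linarith) (by norm_num)]
  have h2pow : (2:ℝ) ^ (2*H - 1) * 2 = 2 ^ (2*H) := by
    nth_rewrite 2 [show (2:ℝ)*H = (2*H - 1) + 1 by ring]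
    rw [Real.rpow_add (by norm_num : (0:ℝ) < 2), Real.rpow_one]
  have hP : (0:ℝ) ≤ (t - s) ^ (2*H) := Real.rpow_nonneg (by linarith) _
  have h2H : (0:ℝ) < 2 ^ (2*H) := Real.rpow_pos_of_pos (by norm_num) _
  have h2H1 : (0:ℝ) < 2 ^ (2*H - 1) := Real.rpow_pos_of_pos (by norm_num) _
  have hfinal : 1/(4*H) * (t - s) ^ (2*H) ≤ c1 * ((t - m) ^ (2*H) / (2*H)) := by
    rw [hpow]
    have hQ : (0:ℝ) ≤ (t - s) ^ (2*H) / 2 ^ (2*H) / (2*H) := by positivity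
    have step : (2:ℝ) ^ (2*H - 1) * ((t - s) ^ (2*H) / 2 ^ (2*H) / (2*H))
        ≤ c1 * ((t - s) ^ (2*H) / 2 ^ (2*H) / (2*H)) := by
      exact mul_le_mul_of_nonneg_right hA hQ
    have hHne : H ≠ 0 := hH0.ne'
    have h2ne : (2:ℝ) ^ (2*H - 1) ≠ 0 := h2H1.ne'
    have heq : (2:ℝ) ^ (2*H - 1) * ((t - s) ^ (2*H) / 2 ^ (2*H) / (2*H))
        = 1/(4*H) * (t - s) ^ (2*H) := by
      rw [← h2pow]
      field_simp
      ring
    calc 1/(4*H) * (t - s) ^ (2*H)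
        = (2:ℝ) ^ (2*H - 1) * ((t - s) ^ (2*H) / 2 ^ (2*H) / (2*H)) := heq.symm
      _ ≤ c1 * ((t - s) ^ (2*H) / 2 ^ (2*H) / (2*H)) := step
      _ = c1 * ((t - s) ^ (2*H) / 2 ^ (2*H) / (2*H)) := rfl
  calc 1/(4*H) * (t - s) ^ (2*H)
      ≤ c1 * ((t - m) ^ (2*H) / (2*H)) := hfinal
    _ = ∫ r in m..t, c1 * (t - r) ^ (2*H - 1) := hcomp.symm
    _ ≤ ∫ r in m..t, (fbmKernel H t r)^2 := hmono
    _ ≤ ∫ r in s..t, (fbmKernel H t r)^2 := by rw [hsplit]; linarith
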